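/- Let S be a finite nonempty set, f : S → {-1,1}, and let {S_u}_{u∈N} be a partition of S indexed by a finite set N such that every block S_u contains at least one point with f = 1 and at least one point with f = -1. For u ∈ N let p_u = |S_u|/|S| and q_u = |{x ∈ S_u : f(x)=1}|/|S_u|, set H = Σ_{u∈N} p_u G(q_u), define the per-node balanced distribution d^u on S by d^u_x = 1/(2·|{x' ∈ S_u : f(x') = f(x)}|) if x ∈ S_u and 0 otherwise, set p'_u = p_u G(q_u)/H and d̂ = Σ_{u∈N} p'_u d^u. Let h : S → {-1,1} and γ ∈ (0,1) satisfy Σ_{x∈S} d̂_x f(x) h(x) ≥ γ. Refine the partition into the blocks S_u^± = {x ∈ S_u : h(x) = ±1}, with p_{u^±} = |S_u^±|/|S| and q_{u^±} = |{x ∈ S_u^± : f(x)=1}|/|S_u^±|. Then, partitioning the nonempty refined blocks into groups by assigning each to an interval of a (δ,η)-net containing its q-value, where δ = λ̂H/6, η = λ̂/3, and λ̂ = 1 − (Σ_{u,±} p_{u^±}G(q_{u^±}))/H, the merged blocks (unions of the groups) form a partition of S whose pseudo-entropy sum Σ_{J} P_J·G(Q_J) (with P_J the total p-mass of group J and Q_J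 its p-weighted average q-value) is at most (1 − γ²/4)·H. -/

import Mathlib

/-- The pseudo-entropy function `G(q) = 2√(q(1-q))`. -/
noncomputable def G (q : ℝ) : ℝ := 2 * Real.sqrt (q * (1 - q))

/-- The `±1` sign attached to a Boolean: `sgn true = 1`, `sgn false = -1`. -/
def sgn (s : Bool) : ℝ := if s then 1 else -1


lemma G_nonneg (x : ℝ) : 0 ≤ G x := by unfold G; positivity

lemma sum_pm {T : Type*} (B : Finset T) (g : T → ℝ)
    (hg : ∀ x ∈ B, g x = 1 ∨ g x = -1) :
    ∑ x ∈ B, g x = 2 * ((B.filter fun x => g x = 1).card : ℝ) - B.card := by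
  classical
  rw [← Finset.sum_filter_add_sum_filter_not B (fun x => g x = 1)]
  rw [Finset.sum_congr rfl (fun x hx => (Finset.mem_filter.mp hx).2)]
  have h2 : ∑ x ∈ B.filter (fun x => ¬ g x = 1), g x
      = ∑ x ∈ B.filter (fun x => ¬ g x = 1), (-1 : ℝ) := by
    refine Finset.sum_congr rfl fun x hx => ?_
    rcases hg x (Finset.mem_filter.mp hx).1 with hc | hc
    · exact absurd hc (Finset.mem_filter.mp hx).2
    · exact hc
  rw [h2, Finset.sum_const, Finset.sum_const]
  have := Finset.card_filter_add_card_filter_not (s := B) (p := fun x => g x = 1)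
  push_cast [← this]
  ring

lemma count_G (m a : ℕ) (ha : a ≤ m) :
    (m : ℝ) * G ((a : ℝ) / m) = 2 * Real.sqrt ((a : ℝ) * ((m : ℝ) - a)) := by
  rcases Nat.eq_zero_or_pos m with hm | hm
  · subst hm
    interval_cases a
    simp [G]
  · have hm' : (0 : ℝ) < m := by exact_mod_cast hm
    have ham : (a : ℝ) ≤ m := by exact_mod_cast ha
    unfold G
    have h1 : (a : ℝ) / m * (1 - a / m) = ((a : ℝ) * ((m:ℝ) - a)) / (m^2) := by
      rw [show (1 - (a:ℝ)/m) = ((m:ℝ)-a)/m by rw [sub_div, div_self hm'.ne']]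
      rw [div_mul_div_comm, sq]
    rw [h1, Real.sqrt_div (by nlinarith), Real.sqrt_sq hm'.le]
    field_simp

set_option maxHeartbeats 1000000 in
lemma keyD (a b : ℝ) (ha0 : 0 ≤ a) (ha1 : a ≤ 1) (hb0 : 0 ≤ b) (hb1 : b ≤ 1) :
    Real.sqrt (a * b) + Real.sqrt ((1 - a) * (1 - b)) ≤ 1 - (a - b)^2 / 2 := by
  set x := Real.sqrt (a * b) with hx
  set y := Real.sqrt ((1 - a) * (1 - b)) with hy
  set s := Real.sqrt (a * (1 - b)) with hs
  set t := Real.sqrt (b * (1 - a)) with ht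
  have hx0 : 0 ≤ x := Real.sqrt_nonneg _
  have hy0 : 0 ≤ y := Real.sqrt_nonneg _
  have hs0 : 0 ≤ s := Real.sqrt_nonneg _
  have ht0 : 0 ≤ t := Real.sqrt_nonneg _
  have hx2 : x^2 = a * b := Real.sq_sqrt (by nlinarith)
  have hy2 : y^2 = (1 - a) * (1 - b) := Real.sq_sqrt (by nlinarith)
  have hs2 : s^2 = a * (1 - b) := Real.sq_sqrt (by nlinarith)
  have ht2 : t^2 = b * (1 - a) := Real.sq_sqrt (by nlinarith)
  have hxy : x * y = s * t := by
    rw [hx, hy, hs, ht, ← Real.sqrt_mul (by nlinarith), ← Real.sqrt_mul (by nlinarith)]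
    ring_nf
  have h2xy : 2 * (s * t) ≤ x^2 + y^2 := by nlinarith [sq_nonneg (x - y)]
  have hst1 : (s + t)^2 ≤ 1 := by nlinarith
  have h1 : a - b = s^2 - t^2 := by rw [hs2, ht2]; ring
  have hab : (a - b)^2 ≤ (s - t)^2 := by
    nlinarith [mul_le_mul_of_nonneg_left hst1 (sq_nonneg (s - t))]
  have hxy2 : (x + y)^2 = 1 - (s - t)^2 := by
    linear_combination hx2 + hy2 + hs2 + ht2 + 2*hxy
  have h3 : (x + y)^2 ≤ 1 - (a - b)^2 := by linarith
  have hexp : (1 - (a - b)^2/2)^2 = 1 - (a - b)^2 + ((a - b)^2)^2/4 := by ring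
  have hc2 : (x + y)^2 ≤ (1 - (a - b)^2/2)^2 := by linarith [sq_nonneg ((a - b)^2)]
  have hab1 : (a - b)^2 ≤ 1 := by nlinarith [sq_nonneg (x + y)]
  have hpos : (0:ℝ) ≤ 1 - (a - b)^2/2 := by linarith
  have hfin := Real.sqrt_le_sqrt hc2
  rwa [Real.sqrt_sq (by positivity), Real.sqrt_sq hpos] at hfin

lemma blockSplit (np nm a b : ℕ) (hnp : 0 < np) (hnm : 0 < nm) (ha : a ≤ np) (hb : b ≤ nm) :
    2 * Real.sqrt ((a:ℝ) * b) + 2 * Real.sqrt (((np:ℝ) - a) * ((nm:ℝ) - b)) ≤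
      2 * Real.sqrt ((np:ℝ) * nm) * (1 - ((a:ℝ)/np - (b:ℝ)/nm)^2 / 2) := by
  have hnp' : (0:ℝ) < np := by exact_mod_cast hnp
  have hnm' : (0:ℝ) < nm := by exact_mod_cast hnm
  have ha' : (a:ℝ) ≤ np := by exact_mod_cast ha
  have hb' : (b:ℝ) ≤ nm := by exact_mod_cast hb
  set α := (a:ℝ)/np with hα
  set β := (b:ℝ)/nm with hβ
  have hα0 : 0 ≤ α := by positivity
  have hα1 : α ≤ 1 := by rw [hα, div_le_one hnp']; exact ha'
  have hβ0 : 0 ≤ β := by positivity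
  have hβ1 : β ≤ 1 := by rw [hβ, div_le_one hnm']; exact hb'
  have e1 : (a:ℝ) * b = (α * β) * ((np:ℝ) * nm) := by
    rw [hα, hβ]; field_simp
  have e2 : ((np:ℝ) - a) * ((nm:ℝ) - b) = ((1 - α) * (1 - β)) * ((np:ℝ) * nm) := by
    rw [hα, hβ]; field_simp
  rw [e1, e2, Real.sqrt_mul (mul_nonneg hα0 hβ0) ((np:ℝ)*nm),
      Real.sqrt_mul (mul_nonneg (by linarith : (0:ℝ) ≤ 1 - α) (by linarith : (0:ℝ) ≤ 1 - β)) ((np:ℝ)*nm)]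
  have hk := keyD α β hα0 hα1 hβ0 hβ1
  have hs : 0 ≤ Real.sqrt ((np:ℝ) * nm) := Real.sqrt_nonneg _
  nlinarith [hk, hs]

set_option maxHeartbeats 2000000 in
/-- split-and-merge step: let `S` be finite nonempty, `f : S → {-1,1}`, and
`ℓ : S → N` a partition into blocks `S_u = ℓ⁻¹(u)` each containing both labels. With
`p_u = |S_u|/|S|`, `q_u = |{x ∈ S_u : f x = 1}|/|S_u|`, `H = Σ_u p_u G(q_u)`, the per-node
balanced distributions `d^u`, weights `p'_u = p_u G(q_u)/H` and mixture `d̂ = Σ_u p'_u d^u`,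
suppose `h : S → {-1,1}` satisfies `Σ_x d̂_x f(x) h(x) ≥ γ` with `γ ∈ (0,1)`. Refine the
partition into blocks `S_u^± = {x ∈ S_u : h x = ±1}` (indexed by `N × Bool`) with masses
`pp` and label frequencies `qq`, put `λ̂ = 1 − (Σ pp·G(qq))/H`, `δ = λ̂H/6`, `η = λ̂/3`,
take a `(δ,η)`-net `0 = v_0 ≤ … ≤ v_w = 1`, and assign (via `κ`) each refined block of positive
mass to an interval containing its `q`-value. Then the merged groups, with masses `PJ` and
weighted average values `QJ`, satisfy `Σ_{k : PJ_k > 0} PJ_k · G(QJ_k) ≤ (1 − γ²/4)·H`. -/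
theorem stmt15 {S N : Type*} [Fintype S] [Nonempty S] [Fintype N] [DecidableEq N]
    (f h : S → ℝ) (hf : ∀ x, f x = 1 ∨ f x = -1) (hh : ∀ x, h x = 1 ∨ h x = -1)
    (ℓ : S → N)
    (hblocks : ∀ u : N, (∃ x, ℓ x = u ∧ f x = 1) ∧ (∃ x, ℓ x = u ∧ f x = -1))
    (p q : N → ℝ)
    (hp : ∀ u, p u = ((Finset.univ.filter fun x => ℓ x = u).card : ℝ) / (Fintype.card S : ℝ))
    (hq : ∀ u, q u = ((Finset.univ.filter fun x => ℓ x = u ∧ f x = 1).card : ℝ) /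
      ((Finset.univ.filter fun x => ℓ x = u).card : ℝ))
    (H : ℝ) (hH : H = ∑ u, p u * G (q u))
    (d : N → S → ℝ)
    (hd : ∀ u x, d u x = if ℓ x = u then
      1 / (2 * ((Finset.univ.filter fun x' => ℓ x' = u ∧ f x' = f x).card : ℝ)) else 0)
    (p' : N → ℝ) (hp' : ∀ u, p' u = p u * G (q u) / H)
    (dhat : S → ℝ) (hdhat : ∀ x, dhat x = ∑ u, p' u * d u x)
    (γ : ℝ) (hγ : γ ∈ Set.Ioo (0 : ℝ) 1)
    (hedge : γ ≤ ∑ x, dhat x * f x * h x)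
    (pp qq : N × Bool → ℝ)
    (hpp : ∀ v : N × Bool, pp v =
      ((Finset.univ.filter fun x => ℓ x = v.1 ∧ h x = sgn v.2).card : ℝ) / (Fintype.card S : ℝ))
    (hqq : ∀ v : N × Bool, qq v =
      ((Finset.univ.filter fun x => ℓ x = v.1 ∧ h x = sgn v.2 ∧ f x = 1).card : ℝ) /
      ((Finset.univ.filter fun x => ℓ x = v.1 ∧ h x = sgn v.2).card : ℝ))
    (lamhat δ η : ℝ)
    (hlamhat : lamhat = 1 - (∑ v, pp v * G (qq v)) / H)
    (hδ : δ = lamhat * H / 6) (hη : η = lamhat / 3)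
    (w : ℕ) (v : ℕ → ℝ) (hv0 : v 0 = 0) (hvw : v w = 1)
    (hmono : ∀ k < w, v k ≤ v (k + 1))
    (hnet : ∀ k < w, ∀ a ∈ Set.Icc (v k) (v (k + 1)), ∀ b ∈ Set.Icc (v k) (v (k + 1)),
      G b ≤ max δ ((1 + η) * G a))
    (κ : N × Bool → ℕ)
    (hκ : ∀ u : N × Bool, 0 < pp u → κ u < w ∧ qq u ∈ Set.Icc (v (κ u)) (v (κ u + 1)))
    (PJ QJ : ℕ → ℝ)
    (hPJ : ∀ k, PJ k = ∑ u ∈ Finset.univ.filter (fun u : N × Bool => κ u = k), pp u)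
    (hQJ : ∀ k, QJ k =
      (∑ u ∈ Finset.univ.filter (fun u : N × Bool => κ u = k), pp u * qq u) / PJ k) :
    ∑ k ∈ (Finset.range w).filter (fun k => 0 < PJ k), PJ k * G (QJ k) ≤
      (1 - γ^2/4) * H := by
  classical
  have hs : (0:ℝ) < (Fintype.card S : ℝ) := by
    exact_mod_cast Fintype.card_pos
  set sc : ℝ := (Fintype.card S : ℝ) with hsc
  set E : N → ℝ := fun u => ∑ x, d u x * f x * h x with hE
  have hfneg : ∀ x : S, f x = -1 ↔ ¬ f x = 1 := by
    intro x; rcases hf x with hx | hx <;> simp [hx] <;> norm_num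
  have hhneg : ∀ x : S, h x = -1 ↔ ¬ h x = 1 := by
    intro x; rcases hh x with hx | hx <;> simp [hx] <;> norm_num
  -- per-block facts
  have hsgnT : sgn true = (1:ℝ) := rfl
  have hsgnF : sgn false = (-1:ℝ) := rfl
  have blockFacts : ∀ u : N,
      pp (u,true) * G (qq (u,true)) + pp (u,false) * G (qq (u,false)) ≤
        p u * G (q u) * (1 - (E u)^2/2) ∧ 0 < p u * G (q u) := by
    intro u
    set Bu := Finset.univ.filter (fun x => ℓ x = u) with hBu
    set Pu := Bu.filter (fun x => f x = 1) with hPu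
    set Mu := Bu.filter (fun x => ¬ f x = 1) with hMu
    set np := Pu.card with hnpdef
    set nm := Mu.card with hnmdef
    set a1 := (Pu.filter (fun x => h x = 1)).card with ha1
    set a2 := (Pu.filter (fun x => ¬ h x = 1)).card with ha2
    set b1 := (Mu.filter (fun x => h x = 1)).card with hb1
    set b2 := (Mu.filter (fun x => ¬ h x = 1)).card with hb2
    have hnpnm : np + nm = Bu.card :=
      Finset.card_filter_add_card_filter_not (p := fun x => f x = 1)
    have ha12 : a1 + a2 = np :=
      Finset.card_filter_add_card_filter_not (p := fun x => h x = 1)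
    have hb12 : b1 + b2 = nm :=
      Finset.card_filter_add_card_filter_not (p := fun x => h x = 1)
    have hnp : 0 < np := by
      obtain ⟨x, hxl, hxf⟩ := (hblocks u).1
      exact Finset.card_pos.mpr ⟨x, by simp [hPu, hBu, hxl, hxf]⟩
    have hnm : 0 < nm := by
      obtain ⟨x, hxl, hxf⟩ := (hblocks u).2
      exact Finset.card_pos.mpr ⟨x, by simp [hMu, hBu, hxl, (hfneg x).mp hxf]⟩
    have hnp' : (0:ℝ) < np := by exact_mod_cast hnp
    have hnm' : (0:ℝ) < nm := by exact_mod_cast hnm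
    -- set identities
    have cP : (Finset.univ.filter fun x => ℓ x = u ∧ f x = 1) = Pu := by
      rw [hPu, hBu, Finset.filter_filter]
    have cT : (Finset.univ.filter fun x => ℓ x = u ∧ h x = sgn true) =
        Bu.filter (fun x => h x = 1) := by
      rw [hBu, Finset.filter_filter, hsgnT]
    have cF : (Finset.univ.filter fun x => ℓ x = u ∧ h x = sgn false) =
        Bu.filter (fun x => ¬ h x = 1) := by
      rw [hBu, Finset.filter_filter, hsgnF]
      exact Finset.filter_congr fun x _ => by simp [hhneg x]
    have cTnum : (Finset.univ.filter fun x => ℓ x = u ∧ h x = sgn true ∧ f x = 1) =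
        Pu.filter (fun x => h x = 1) := by
      rw [hPu, hBu, Finset.filter_filter, Finset.filter_filter, hsgnT]
      exact Finset.filter_congr fun x _ => by tauto
    have cFnum : (Finset.univ.filter fun x => ℓ x = u ∧ h x = sgn false ∧ f x = 1) =
        Pu.filter (fun x => ¬ h x = 1) := by
      rw [hPu, hBu, Finset.filter_filter, Finset.filter_filter, hsgnF]
      exact Finset.filter_congr fun x _ => by simp [hhneg x]; tauto
    have eT : (Bu.filter (fun x => h x = 1)).card = a1 + b1 := by
      rw [← Finset.card_filter_add_card_filter_not
        (s := Bu.filter (fun x => h x = 1)) (p := fun x => f x = 1)]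
      rw [show ((Bu.filter (fun x => h x = 1)).filter (fun x => f x = 1))
          = Pu.filter (fun x => h x = 1) by rw [Finset.filter_comm, ← hPu]]
      rw [show ((Bu.filter (fun x => h x = 1)).filter (fun x => ¬ f x = 1))
          = Mu.filter (fun x => h x = 1) by rw [Finset.filter_comm, ← hMu]]
    have eF : (Bu.filter (fun x => ¬ h x = 1)).card = a2 + b2 := by
      rw [← Finset.card_filter_add_card_filter_not
        (s := Bu.filter (fun x => ¬ h x = 1)) (p := fun x => f x = 1)]
      rw [show ((Bu.filter (fun x => ¬ h x = 1)).filter (fun x => f x = 1))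
          = Pu.filter (fun x => ¬ h x = 1) by rw [Finset.filter_comm, ← hPu]]
      rw [show ((Bu.filter (fun x => ¬ h x = 1)).filter (fun x => ¬ f x = 1))
          = Mu.filter (fun x => ¬ h x = 1) by rw [Finset.filter_comm, ← hMu]]
    -- real identities
    have pGq : p u * G (q u) = 2 * Real.sqrt ((np:ℝ) * nm) / sc := by
      have hcg := count_G (np + nm) np (Nat.le_add_right _ _)
      have hcast : ((np + nm : ℕ) : ℝ) - (np:ℝ) = (nm:ℝ) := by push_cast; ring
      rw [hcast] at hcg
      rw [hp, hq, cP, ← hnpnm, ← hnpdef]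
      push_cast
      push_cast at hcg
      rw [div_mul_eq_mul_div, ← hcg]
    have ppT : pp (u,true) * G (qq (u,true)) = 2 * Real.sqrt ((a1:ℝ) * b1) / sc := by
      have hppT := hpp (u,true)
      have hqqT := hqq (u,true)
      dsimp only at hppT hqqT
      rw [cT, eT] at hppT
      rw [cTnum, cT, eT, ← ha1] at hqqT
      have hcg := count_G (a1 + b1) a1 (Nat.le_add_right _ _)
      have hcast : ((a1 + b1 : ℕ) : ℝ) - (a1:ℝ) = (b1:ℝ) := by push_cast; ring
      rw [hcast] at hcg
      rw [hppT, hqqT]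
      push_cast
      push_cast at hcg
      rw [div_mul_eq_mul_div, ← hcg]
    have ppF : pp (u,false) * G (qq (u,false)) = 2 * Real.sqrt ((a2:ℝ) * b2) / sc := by
      have hppF := hpp (u,false)
      have hqqF := hqq (u,false)
      dsimp only at hppF hqqF
      rw [cF, eF] at hppF
      rw [cFnum, cF, eF, ← ha2] at hqqF
      have hcg := count_G (a2 + b2) a2 (Nat.le_add_right _ _)
      have hcast : ((a2 + b2 : ℕ) : ℝ) - (a2:ℝ) = (b2:ℝ) := by push_cast; ring
      rw [hcast] at hcg
      rw [hppF, hqqF]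
      push_cast
      push_cast at hcg
      rw [div_mul_eq_mul_div, ← hcg]
    -- the edge of block u
    have hEu : E u = (a1:ℝ)/np - (b1:ℝ)/nm := by
      have hstep1 : ∑ x ∈ Bu, d u x * f x * h x = ∑ x, d u x * f x * h x := by
        rw [hBu]
        refine Finset.sum_filter_of_ne fun x _ hx => ?_
        by_contra hlx
        exact hx (by rw [hd, if_neg hlx]; ring)
      have hsplit := Finset.sum_filter_add_sum_filter_not Bu (fun x => f x = 1)
        (fun x => d u x * f x * h x)
      rw [← hPu, ← hMu] at hsplit
      have hsumP : ∑ x ∈ Pu, d u x * f x * h x = (1/(2*(np:ℝ))) * (2*(a1:ℝ) - np) := by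
        have hterm : ∀ x ∈ Pu, d u x * f x * h x = (1/(2*(np:ℝ))) * h x := by
          intro x hx
          rw [hPu, hBu, Finset.mem_filter, Finset.mem_filter] at hx
          obtain ⟨⟨-, hxl⟩, hxf⟩ := hx
          rw [hd, if_pos hxl, hxf]
          have : (Finset.univ.filter fun x' => ℓ x' = u ∧ f x' = (1:ℝ)) = Pu := cP
          rw [this, ← hnpdef]
          ring
        rw [Finset.sum_congr rfl hterm, ← Finset.mul_sum,
          sum_pm Pu h (fun x _ => hh x), ← ha1, ← hnpdef]
      have hsumM : ∑ x ∈ Mu, d u x * f x * h x = (1/(2*(nm:ℝ))) * ((nm:ℝ) - 2*(b1:ℝ)) := by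
        have hterm : ∀ x ∈ Mu, d u x * f x * h x = -((1/(2*(nm:ℝ))) * h x) := by
          intro x hx
          rw [hMu, hBu, Finset.mem_filter, Finset.mem_filter] at hx
          obtain ⟨⟨-, hxl⟩, hxf⟩ := hx
          have hxf' : f x = -1 := (hfneg x).mpr hxf
          rw [hd, if_pos hxl, hxf']
          have hMeq : (Finset.univ.filter fun x' => ℓ x' = u ∧ f x' = (-1:ℝ)) = Mu := by
            rw [hMu, hBu, Finset.filter_filter]
            exact Finset.filter_congr fun y _ => by simp [hfneg y]
          rw [hMeq, ← hnmdef]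
          ring
        rw [Finset.sum_congr rfl hterm, Finset.sum_neg_distrib, ← Finset.mul_sum,
          sum_pm Mu h (fun x _ => hh x), ← hb1, ← hnmdef]
        ring
      have hEval : E u = ∑ x, d u x * f x * h x := rfl
      rw [hEval, ← hstep1, ← hsplit, hsumP, hsumM]
      field_simp
      ring
    constructor
    · have hbs := blockSplit np nm a1 b1 hnp hnm (by omega) (by omega)
      have hc1 : (np:ℝ) - a1 = (a2:ℝ) := by
        have : (np:ℝ) = (a1:ℝ) + a2 := by exact_mod_cast ha12.symm
        linarith
      have hc2 : (nm:ℝ) - b1 = (b2:ℝ) := by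
        have : (nm:ℝ) = (b1:ℝ) + b2 := by exact_mod_cast hb12.symm
        linarith
      rw [hc1, hc2] at hbs
      rw [ppT, ppF, pGq, hEu, div_mul_eq_mul_div, ← add_div, div_le_div_iff₀ hs hs]
      nlinarith [hbs, hs.le]
    · rw [pGq]
      have h1 : (0:ℝ) < Real.sqrt ((np:ℝ) * nm) := Real.sqrt_pos.mpr (by positivity)
      positivity
  have hNne : Nonempty N := ⟨ℓ (Classical.arbitrary S)⟩
  have hH0 : 0 < H := by
    rw [hH]; exact Finset.sum_pos (fun u _ => (blockFacts u).2) Finset.univ_nonempty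
  have hp'sum : ∑ u, p' u = 1 := by
    simp_rw [hp']; rw [← Finset.sum_div, ← hH, div_self hH0.ne']
  have hp'nn : ∀ u, 0 ≤ p' u := fun u => by
    rw [hp']; exact div_nonneg (blockFacts u).2.le hH0.le
  have hedge' : γ ≤ ∑ u, p' u * E u := by
    refine le_trans hedge (le_of_eq ?_)
    simp_rw [hdhat, Finset.sum_mul]
    rw [Finset.sum_comm]
    refine Finset.sum_congr rfl fun u _ => ?_
    rw [hE, Finset.mul_sum]
    exact Finset.sum_congr rfl fun x _ => by ring
  have hCS : γ^2 ≤ ∑ u, p' u * (E u)^2 := by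
    have hcs := Finset.sum_mul_sq_le_sq_mul_sq Finset.univ
      (fun u => Real.sqrt (p' u)) (fun u => Real.sqrt (p' u) * E u)
    have e1 : ∑ u, Real.sqrt (p' u) * (Real.sqrt (p' u) * E u) = ∑ u, p' u * E u :=
      Finset.sum_congr rfl fun u _ => by
        rw [← mul_assoc, Real.mul_self_sqrt (hp'nn u)]
    have e2 : ∑ u, (Real.sqrt (p' u))^2 = ∑ u, p' u :=
      Finset.sum_congr rfl fun u _ => Real.sq_sqrt (hp'nn u)
    have e3 : ∑ u, (Real.sqrt (p' u) * E u)^2 = ∑ u, p' u * (E u)^2 :=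
      Finset.sum_congr rfl fun u _ => by
        rw [mul_pow, Real.sq_sqrt (hp'nn u)]
    rw [e1, e2, e3, hp'sum, one_mul] at hcs
    calc γ^2 ≤ (∑ u, p' u * E u)^2 := by
          have h0 : 0 ≤ γ := hγ.1.le
          nlinarith [hedge']
      _ ≤ _ := hcs
  have hsplitsum : ∑ z : N × Bool, pp z * G (qq z) ≤ (1 - γ^2/2) * H := by
    rw [Fintype.sum_prod_type]
    have step : ∑ u, ∑ b : Bool, pp (u,b) * G (qq (u,b)) ≤
        ∑ u, p u * G (q u) * (1 - (E u)^2/2) := by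
      refine Finset.sum_le_sum fun u _ => ?_
      rw [Fintype.sum_bool]
      exact (blockFacts u).1
    refine le_trans step ?_
    have e4 : ∑ u, p u * G (q u) * (1 - (E u)^2/2) =
        H - (1/2) * ∑ u, p' u * (E u)^2 * H := by
      have term : ∀ u, p u * G (q u) * (1 - (E u)^2/2)
          = p u * G (q u) - (1/2) * (p' u * (E u)^2 * H) := by
        intro u
        have e0 : p' u * (E u)^2 * H = p u * G (q u) * (E u)^2 := by
          rw [hp']; field_simp
        rw [e0]; ring
      rw [Finset.sum_congr rfl (fun u _ => term u), Finset.sum_sub_distrib, ← hH,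
        ← Finset.mul_sum]
    rw [e4]
    have e5 : ∑ u, p' u * (E u)^2 * H = (∑ u, p' u * (E u)^2) * H := by
      rw [Finset.sum_mul]
    rw [e5]
    nlinarith [hCS, hH0]
  have hlam : γ^2/2 ≤ lamhat := by
    rw [hlamhat]
    have hdiv : (∑ z, pp z * G (qq z)) / H ≤ 1 - γ^2/2 := by
      rw [div_le_iff₀ hH0]
      linarith [hsplitsum]
    linarith
  have hlam0 : 0 < lamhat := lt_of_lt_of_le (div_pos (pow_pos hγ.1 2) two_pos) hlam
  have hppG_eq : ∑ z, pp z * G (qq z) = (1 - lamhat) * H := by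
    rw [hlamhat]
    field_simp
    ring
  have hppnn : ∀ z : N × Bool, 0 ≤ pp z := fun z => by rw [hpp]; exact div_nonneg (Nat.cast_nonneg _) (Nat.cast_nonneg _)
  have hδnn : 0 ≤ δ := by rw [hδ]; exact div_nonneg (mul_nonneg hlam0.le hH0.le) (by norm_num)
  have hηnn : 0 ≤ η := by rw [hη]; exact div_nonneg hlam0.le (by norm_num)
  have hbool : ∀ (x : S) (b : Bool), ((if h x = 1 then true else false) = b ↔ h x = sgn b) := by
    intro x b
    rcases hh x with hx | hx <;> cases b <;> simp only [hx, sgn] <;> norm_num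
  have hppsum : ∑ z : N × Bool, pp z = 1 := by
    simp_rw [hpp]
    rw [← Finset.sum_div, div_eq_one_iff_eq hs.ne']
    have hcard : (Fintype.card S) = ∑ z : N × Bool,
        (Finset.univ.filter fun x => ℓ x = z.1 ∧ h x = sgn z.2).card := by
      have hfib := Finset.card_eq_sum_card_fiberwise
        (f := fun x : S => ((ℓ x, if h x = 1 then true else false) : N × Bool))
        (s := Finset.univ) (t := Finset.univ) (fun x _ => Finset.mem_univ _)
      rw [← Fintype.card] at hfib
      rw [hfib]
      refine Finset.sum_congr rfl fun z _ => ?_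
      congr 1
      ext x
      simp only [Finset.mem_filter, Finset.mem_univ, true_and, Prod.ext_iff]
      rw [hbool x z.2]
    rw [hsc]
    exact_mod_cast hcard.symm
  -- merge part
  set K := (Finset.range w).filter (fun k => 0 < PJ k) with hK
  set s0 : Finset (N × Bool) := Finset.univ.filter (fun z => 0 < pp z) with hs0
  set F : N × Bool → ℝ := fun z => pp z * (δ + (1+η) * G (qq z)) with hF
  have hmap : ∀ z ∈ s0, κ z ∈ K := by
    intro z hz
    have hz' : 0 < pp z := (Finset.mem_filter.mp hz).2
    refine Finset.mem_filter.mpr ⟨Finset.mem_range.mpr (hκ z hz').1, ?_⟩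
    rw [hPJ]
    refine lt_of_lt_of_le hz' (Finset.single_le_sum (fun i _ => hppnn i) ?_)
    simp
  have hfiber := Finset.sum_fiberwise_of_maps_to hmap F
  have hkey : ∀ k ∈ K, PJ k * G (QJ k) ≤ ∑ z ∈ s0.filter (fun z => κ z = k), F z := by
    intro k hk
    obtain ⟨hkr, hkpos⟩ := Finset.mem_filter.mp hk
    have hkw : k < w := Finset.mem_range.mp hkr
    set T := s0.filter (fun z => κ z = k) with hT
    have hTmem : ∀ z, z ∈ T ↔ (0 < pp z ∧ κ z = k) := by
      intro z
      simp [hT, hs0, and_comm]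
    have hTsub : T ⊆ Finset.univ.filter (fun z => κ z = k) := by
      intro z hz
      simp only [Finset.mem_filter, Finset.mem_univ, true_and]
      exact ((hTmem z).mp hz).2
    have hzero : ∀ z ∈ Finset.univ.filter (fun z : N × Bool => κ z = k),
        z ∉ T → pp z = 0 := by
      intro z hz hzT
      by_contra hne
      have hzpos : 0 < pp z := lt_of_le_of_ne (hppnn z) (Ne.symm hne)
      exact hzT ((hTmem z).mpr ⟨hzpos, (Finset.mem_filter.mp hz).2⟩)
    have hPJk : PJ k = ∑ z ∈ T, pp z := by
      rw [hPJ]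
      exact (Finset.sum_subset hTsub (fun z hz hzT => hzero z hz hzT)).symm
    have hQnum : ∑ z ∈ Finset.univ.filter (fun z : N × Bool => κ z = k), pp z * qq z
        = ∑ z ∈ T, pp z * qq z := by
      refine (Finset.sum_subset hTsub (fun z hz hzT => ?_)).symm
      rw [hzero z hz hzT, zero_mul]
    have hlow : v k * PJ k ≤ ∑ z ∈ T, pp z * qq z := by
      rw [hPJk, Finset.mul_sum]
      refine Finset.sum_le_sum fun z hz => ?_
      obtain ⟨hzpp, hzk⟩ := (hTmem z).mp hz
      have := (hκ z hzpp).2.1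
      rw [hzk] at this
      calc v k * pp z = pp z * v k := by ring
        _ ≤ pp z * qq z := mul_le_mul_of_nonneg_left this (hppnn z)
    have hhigh : ∑ z ∈ T, pp z * qq z ≤ v (k+1) * PJ k := by
      rw [hPJk, Finset.mul_sum]
      refine Finset.sum_le_sum fun z hz => ?_
      obtain ⟨hzpp, hzk⟩ := (hTmem z).mp hz
      have := (hκ z hzpp).2.2
      rw [hzk] at this
      calc pp z * qq z ≤ pp z * v (k+1) := mul_le_mul_of_nonneg_left this (hppnn z)
        _ = v (k+1) * pp z := by ring
    have hQmem : QJ k ∈ Set.Icc (v k) (v (k+1)) := by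
      rw [hQJ, hQnum]
      constructor
      · rw [le_div_iff₀ hkpos]
        linarith
      · rw [div_le_iff₀ hkpos]
        linarith
    calc PJ k * G (QJ k) = ∑ z ∈ T, pp z * G (QJ k) := by rw [hPJk, Finset.sum_mul]
      _ ≤ ∑ z ∈ T, F z := by
          refine Finset.sum_le_sum fun z hz => ?_
          obtain ⟨hzpp, hzk⟩ := (hTmem z).mp hz
          have hqqz : qq z ∈ Set.Icc (v k) (v (k+1)) := by
            have := (hκ z hzpp).2
            rwa [hzk] at this
          have hmax := hnet k hkw (qq z) hqqz (QJ k) hQmem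
          have hGle : G (QJ k) ≤ δ + (1+η) * G (qq z) := by
            refine le_trans hmax (max_le ?_ ?_)
            · have : 0 ≤ (1+η) * G (qq z) := by
                have := G_nonneg (qq z); nlinarith [hηnn]
              linarith
            · linarith [hδnn]
          rw [hF]
          exact mul_le_mul_of_nonneg_left hGle (hppnn z)
  calc ∑ k ∈ K, PJ k * G (QJ k) ≤ ∑ k ∈ K, ∑ z ∈ s0.filter (fun z => κ z = k), F z :=
        Finset.sum_le_sum hkey
    _ = ∑ z ∈ s0, F z := hfiber
    _ ≤ ∑ z : N × Bool, F z := by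
        refine Finset.sum_le_sum_of_subset_of_nonneg (Finset.filter_subset _ _) ?_
        intro z _ _
        rw [hF]
        have := G_nonneg (qq z)
        have := hppnn z
        positivity
    _ = δ * (∑ z : N × Bool, pp z) + (1+η) * ∑ z : N × Bool, pp z * G (qq z) := by
        rw [Finset.mul_sum, Finset.mul_sum, ← Finset.sum_add_distrib]
        exact Finset.sum_congr rfl fun z _ => by rw [hF]; ring
    _ = δ + (1+η) * ((1 - lamhat) * H) := by rw [hppsum, hppG_eq, mul_one]
    _ ≤ (1 - γ^2/4) * H := by
        rw [hδ, hη]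
        nlinarith [mul_nonneg hH0.le (sub_nonneg.mpr hlam), mul_nonneg hH0.le (sq_nonneg lamhat),
          hH0.le]
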